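/- Let p ∈ [1,2] and let {K_1,…,K_m} ⊆ M_{N,n}(ℂ) be a set of incoherent Kraus operators. Then for every A ∈ M_n(ℂ), Σ_{k=1}^m ℓ_{1,p}(K_k A K_k†) ≤ ℓ_{1,p}(A). -/

import Mathlib

open scoped ENNReal ComplexOrder
open Matrix

noncomputable section

/-- The `ℓ_p` norm of a complex vector, `p ∈ [1,∞]`. -/
def lpV (p : ℝ≥0∞) {n : ℕ} (v : Fin n → ℂ) : ℝ :=
  if p = ∞ then ⨆ i, ‖v i‖ else (∑ i, ‖v i‖ ^ p.toReal) ^ (1 / p.toReal)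

/-- The `ℓ_{q,p}` norm of a complex matrix: the `ℓ_q` norm of the vector of
`ℓ_p` norms of its columns. -/
def lqp (q p : ℝ≥0∞) {m n : ℕ} (A : Matrix (Fin m) (Fin n) ℂ) : ℝ :=
  lpV q fun j => ((lpV p fun i => A i j : ℝ) : ℂ)

/-- A density matrix: positive semidefinite with trace one. -/
def IsDensity {n : ℕ} (ρ : Matrix (Fin n) (Fin n) ℂ) : Prop :=
  ρ.PosSemidef ∧ ρ.trace = 1

/-- An incoherent (classical) state: a diagonal density matrix. -/
def IsIncoherentState {n : ℕ} (ρ : Matrix (Fin n) (Fin n) ℂ) : Prop :=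
  IsDensity ρ ∧ ρ.IsDiag

/-- `C_ν(ρ) = min {ν(ρ - σ) : σ ∈ I_n}` (as an infimum). -/
def distC {n : ℕ} (ν : Matrix (Fin n) (Fin n) ℂ → ℝ) (ρ : Matrix (Fin n) (Fin n) ℂ) : ℝ :=
  sInf {x | ∃ σ, IsIncoherentState σ ∧ x = ν (ρ - σ)}

/-- A set of incoherent Kraus operators `K_j : M_{m,n}`:
`∑ K_j† K_j = I` and each `K_j σ K_j†` is diagonal for diagonal densities `σ`. -/
def IsIncoherentKraus {m n r : ℕ} (K : Fin r → Matrix (Fin m) (Fin n) ℂ) : Prop :=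
  (∑ j, (K j)ᴴ * K j) = 1 ∧
  ∀ j (σ : Matrix (Fin n) (Fin n) ℂ), IsIncoherentState σ → (K j * σ * (K j)ᴴ).IsDiag

/-- A family of candidate coherence measures, one for each dimension. -/
abbrev CFam := ∀ n : ℕ, Matrix (Fin n) (Fin n) ℂ → ℝ

/-- Condition (B1) = (C1): nonnegativity, vanishing exactly on incoherent states. -/
def CondB1 (C : CFam) : Prop :=
  ∀ n (ρ : Matrix (Fin n) (Fin n) ℂ), IsDensity ρ →
    0 ≤ C n ρ ∧ (C n ρ = 0 ↔ IsIncoherentState ρ)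

/-- Condition (B2) = (C2): monotonicity under incoherent operations. -/
def CondB2 (C : CFam) : Prop :=
  ∀ (n m r : ℕ) (K : Fin r → Matrix (Fin m) (Fin n) ℂ), IsIncoherentKraus K →
    ∀ ρ, IsDensity ρ → C m (∑ j, K j * ρ * (K j)ᴴ) ≤ C n ρ

/-- Condition (B3): monotonicity on average under selective incoherent operations. -/
def CondB3 (C : CFam) : Prop :=
  ∀ (n m r : ℕ) (K : Fin r → Matrix (Fin m) (Fin n) ℂ), IsIncoherentKraus K →
    ∀ ρ, IsDensity ρ →
      ∑ j, ((K j * ρ * (K j)ᴴ).trace).re *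
          C m (((((K j * ρ * (K j)ᴴ).trace).re)⁻¹ : ℂ) • (K j * ρ * (K j)ᴴ)) ≤ C n ρ

/-- Condition (B4): convexity. -/
def CondB4 (C : CFam) : Prop :=
  ∀ (n r : ℕ) (ρ : Fin r → Matrix (Fin n) (Fin n) ℂ) (p : Fin r → ℝ),
    (∀ j, IsDensity (ρ j)) → (∀ j, 0 ≤ p j) → (∑ j, p j) = 1 →
    C n (∑ j, (p j : ℂ) • ρ j) ≤ ∑ j, p j * C n (ρ j)

/-- Block diagonal direct sum of two square matrices, reindexed to `Fin (n₁ + n₂)`. -/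
def dirSum {n₁ n₂ : ℕ} (A : Matrix (Fin n₁) (Fin n₁) ℂ) (B : Matrix (Fin n₂) (Fin n₂) ℂ) :
    Matrix (Fin (n₁ + n₂)) (Fin (n₁ + n₂)) ℂ :=
  (Matrix.fromBlocks A 0 0 B).submatrix finSumFinEquiv.symm finSumFinEquiv.symm

/-- Condition (C3): additivity under direct sum convex combinations. -/
def CondC3 (C : CFam) : Prop :=
  ∀ (n₁ n₂ : ℕ) (ρ₁ : Matrix (Fin n₁) (Fin n₁) ℂ) (ρ₂ : Matrix (Fin n₂) (Fin n₂) ℂ)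
    (p₁ p₂ : ℝ), IsDensity ρ₁ → IsDensity ρ₂ → 0 ≤ p₁ → 0 ≤ p₂ → p₁ + p₂ = 1 →
    C (n₁ + n₂) (dirSum ((p₁ : ℂ) • ρ₁) ((p₂ : ℂ) • ρ₂)) = p₁ * C n₁ ρ₁ + p₂ * C n₂ ρ₂

/-- A norm on `M_n(ℂ)` (nonnegativity is automatic). -/
def IsMatrixNorm {n : ℕ} (ν : Matrix (Fin n) (Fin n) ℂ → ℝ) : Prop :=
  (∀ A, ν A = 0 ↔ A = 0) ∧ (∀ (c : ℂ) A, ν (c • A) = ‖c‖ * ν A) ∧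
  (∀ A B, ν (A + B) ≤ ν A + ν B)

open scoped NNReal
open Finset


/-- Proposition on contraction: for `p ∈ [1,2]` and a set of incoherent
Kraus operators `K₁,…,K_m ∈ M_{N,n}(ℂ)`, `∑ₖ ℓ_{1,p}(Kₖ A Kₖ†) ≤ ℓ_{1,p}(A)` for all
`A ∈ M_n(ℂ)`. -/

def nnLp (pt : ℝ) {d : ℕ} (v : Fin d → ℂ) : ℝ≥0 :=
  (∑ a, ‖v a‖₊ ^ pt) ^ (1 / pt)

def sigK {N n m : ℕ} (K : Fin m → Matrix (Fin N) (Fin n) ℂ) (τ : Fin n → ℝ≥0)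
    (k : Fin m) (a : Fin N) : ℝ≥0 :=
  univ.sup fun i => if K k a i = 0 then 0 else τ i

section Aux
variable {N n m : ℕ}

lemma kraus_energy (K : Fin m → Matrix (Fin N) (Fin n) ℂ)
    (hKraus : (∑ k, (K k)ᴴ * K k) = 1) (x : Fin n → ℂ) :
    ∑ k, ∑ a, ‖(K k *ᵥ x) a‖₊ ^ (2:ℝ) = ∑ i, ‖x i‖₊ ^ (2:ℝ) := by
  have h1 : ∀ k, (star (K k *ᵥ x)) ⬝ᵥ (K k *ᵥ x)
      = (star x) ⬝ᵥ (((K k)ᴴ * K k) *ᵥ x) := by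
    intro k
    rw [Matrix.star_mulVec, ← Matrix.mulVec_mulVec, Matrix.dotProduct_mulVec,
      Matrix.dotProduct_mulVec, Matrix.vecMul_vecMul, Matrix.dotProduct_mulVec,
      Matrix.vecMul_vecMul]
  have h2 : ∑ k, (star x) ⬝ᵥ (((K k)ᴴ * K k) *ᵥ x)
      = (star x) ⬝ᵥ ((∑ k, (K k)ᴴ * K k) *ᵥ x) := by
    simp only [dotProduct, Matrix.mulVec, Matrix.sum_apply, Finset.sum_mul,
      Finset.mul_sum]
    rw [Finset.sum_comm]
    exact Finset.sum_congr rfl fun i _ => Finset.sum_comm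
  have hC : ∑ k, (star (K k *ᵥ x)) ⬝ᵥ (K k *ᵥ x) = (star x) ⬝ᵥ x := by
    simp only [h1]
    rw [h2, hKraus, Matrix.one_mulVec]
  have hsq : ∀ z : ℂ, star z * z = (((‖z‖₊ ^ (2:ℝ) : ℝ≥0) : ℝ) : ℂ) := by
    intro z
    have h3 : ((‖z‖₊ ^ (2:ℝ) : ℝ≥0) : ℝ) = Complex.normSq z := by
      rw [NNReal.coe_rpow, coe_nnnorm, show (2:ℝ) = ((2:ℕ):ℝ) by norm_num,
        Real.rpow_natCast, Complex.sq_norm]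
    rw [Complex.star_def, mul_comm, Complex.mul_conj, h3]
  simp only [dotProduct, Pi.star_apply, hsq] at hC
  exact_mod_cast hC

end Aux

section M
variable {N n m : ℕ}

lemma split_div (a s σ : ℝ≥0) (hs : s ≠ 0) (h0 : σ ≠ 0) (hlt : σ < s) :
    a / σ = a / (s * σ / (s - σ)) + a / s := by
  have hsub : s - σ ≠ 0 := (tsub_pos_of_lt hlt).ne'
  have h1 : (s * σ) ≠ 0 := mul_ne_zero hs h0
  have key : σ⁻¹ = (s * σ / (s - σ))⁻¹ + s⁻¹ := by
    rw [inv_div]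
    apply mul_right_cancel₀ h1
    have e1 : σ⁻¹ * (s * σ) = s := by
      rw [mul_comm s σ, ← mul_assoc, inv_mul_cancel₀ h0, one_mul]
    have e2 : ((s - σ) / (s * σ) + s⁻¹) * (s * σ) = s := by
      rw [add_mul, div_mul_cancel₀ _ h1, ← mul_assoc, inv_mul_cancel₀ hs, one_mul,
        tsub_add_cancel_of_le hlt.le]
    rw [e1, e2]
  rw [div_eq_mul_inv a σ, key, mul_add]
  simp [div_eq_mul_inv]

lemma tau_le_sig {K : Fin m → Matrix (Fin N) (Fin n) ℂ} {τ : Fin n → ℝ≥0}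
    {k : Fin m} {a : Fin N} {i : Fin n} (h : K k a i ≠ 0) : τ i ≤ sigK K τ k a := by
  have := Finset.le_sup (f := fun i => if K k a i = 0 then 0 else τ i) (Finset.mem_univ i)
  simp only [if_neg h] at this
  exact this

lemma lemmaM (K : Fin m → Matrix (Fin N) (Fin n) ℂ)
    (hKraus : (∑ k, (K k)ᴴ * K k) = 1) :
    ∀ (c : ℕ) (τ : Fin n → ℝ≥0) (x : Fin n → ℂ), (∀ i, τ i = 0 → x i = 0) →
      ((univ.image τ).erase 0).card ≤ c →
      ∑ k, ∑ a, ‖(K k *ᵥ x) a‖₊ ^ (2:ℝ) / sigK K τ k a ≤ ∑ i, ‖x i‖₊ ^ (2:ℝ) / τ i := by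
  classical
  have hzero : ∀ (τ : Fin n → ℝ≥0) (x : Fin n → ℂ), (∀ i, τ i = 0 → x i = 0) →
      (∀ i, τ i = 0) →
      ∑ k, ∑ a, ‖(K k *ᵥ x) a‖₊ ^ (2:ℝ) / sigK K τ k a ≤ ∑ i, ‖x i‖₊ ^ (2:ℝ) / τ i := by
    intro τ x hx hτ
    have hx0 : ∀ i, x i = 0 := fun i => hx i (hτ i)
    have hv : ∀ k a, (K k *ᵥ x) a = 0 := by
      intro k a; simp [Matrix.mulVec, dotProduct, hx0]
    have : ∀ k, ∑ a, ‖(K k *ᵥ x) a‖₊ ^ (2:ℝ) / sigK K τ k a = 0 := by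
      intro k
      apply Finset.sum_eq_zero; intro a _
      rw [hv k a]
      simp [NNReal.zero_rpow (by norm_num : (2:ℝ) ≠ 0)]
    rw [Finset.sum_congr rfl fun k _ => this k]
    simp
  intro c
  induction c with
  | zero =>
    intro τ x hx hcard
    refine hzero τ x hx fun i => ?_
    by_contra h
    have hmem : τ i ∈ (univ.image τ).erase 0 :=
      Finset.mem_erase.2 ⟨h, Finset.mem_image_of_mem τ (Finset.mem_univ i)⟩
    have := Finset.card_pos.2 ⟨_, hmem⟩
    omega
  | succ c ih =>
    intro τ x hx hcard
    set s := univ.sup τ with hs_def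
    by_cases hs : s = 0
    · refine hzero τ x hx fun i => le_zero_iff.1 ?_
      exact hs ▸ Finset.le_sup (Finset.mem_univ i)
    · have hne : (univ : Finset (Fin n)).Nonempty := by
        rcases Finset.eq_empty_or_nonempty (univ : Finset (Fin n)) with h | h
        · exact absurd (by rw [hs_def, h, Finset.sup_empty]; rfl) hs
        · exact h
      obtain ⟨i₀, -, hi₀⟩ := Finset.exists_mem_eq_sup univ hne τ
      have hles : ∀ i, τ i ≤ s := fun i => Finset.le_sup (Finset.mem_univ i)
      set τ' : Fin n → ℝ≥0 := fun i => if τ i = s then 0 else s * τ i / (s - τ i) with hτ'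
      set y : Fin n → ℂ := fun i => if τ i = s then 0 else x i with hy
      have hx' : ∀ i, τ' i = 0 → y i = 0 := by
        intro i h
        by_cases hts : τ i = s
        · simp [hy, hts]
        · simp only [hτ', if_neg hts] at h
          have hsub : s - τ i ≠ 0 := (tsub_pos_of_lt (lt_of_le_of_ne (hles i) hts)).ne'
          have hτ0 : τ i = 0 := by
            rcases div_eq_zero_iff.1 h with h' | h'
            · exact (mul_eq_zero.1 h').resolve_left hs
            · exact absurd h' hsub
          simp [hy, if_neg hts, hx i hτ0]
      have hcard' : ((univ.image τ').erase 0).card ≤ c := by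
        have hsmem : s ∈ (univ.image τ).erase 0 := by
          refine Finset.mem_erase.2 ⟨hs, ?_⟩
          rw [hs_def, hi₀]
          exact Finset.mem_image_of_mem τ (Finset.mem_univ i₀)
        have hsub : (univ.image τ').erase 0 ⊆
            (((univ.image τ).erase 0).erase s).image (fun t => s * t / (s - t)) := by
          intro v hv
          obtain ⟨hv0, hvim⟩ := Finset.mem_erase.1 hv
          obtain ⟨i, -, hvi⟩ := Finset.mem_image.1 hvim
          have hts : τ i ≠ s := by
            intro h; apply hv0; rw [← hvi]; simp [hτ', h]
          have ht0 : τ i ≠ 0 := by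
            intro h; apply hv0; rw [← hvi]; simp [hτ', if_neg hts, h]
          refine Finset.mem_image.2 ⟨τ i, ?_, ?_⟩
          · exact Finset.mem_erase.2 ⟨hts, Finset.mem_erase.2
              ⟨ht0, Finset.mem_image_of_mem τ (Finset.mem_univ i)⟩⟩
          · rw [← hvi]; simp [hτ', if_neg hts]
        have h1 := Finset.card_le_card hsub
        have h2 := Finset.card_image_le
          (s := ((univ.image τ).erase 0).erase s) (f := fun t => s * t / (s - t))
        have h3 := Finset.card_erase_of_mem hsmem
        omega
      have IH := ih τ' y hx' hcard'
      have hstar : ∀ k a, ‖(K k *ᵥ x) a‖₊ ^ (2:ℝ) / sigK K τ k a ≤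
          ‖(K k *ᵥ y) a‖₊ ^ (2:ℝ) / sigK K τ' k a + ‖(K k *ᵥ x) a‖₊ ^ (2:ℝ) / s := by
        intro k a
        rcases eq_or_ne (sigK K τ k a) 0 with h0 | h0
        · rw [h0, div_zero]; exact zero_le
        rcases eq_or_ne (sigK K τ k a) s with hσs | hσs
        · rw [hσs]; exact le_add_self
        have hσlt : sigK K τ k a < s := by
          refine lt_of_le_of_ne (Finset.sup_le fun i _ => ?_) hσs
          split_ifs
          · exact zero_le
          · exact hles i
        have hvy : (K k *ᵥ y) a = (K k *ᵥ x) a := by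
          simp only [Matrix.mulVec, dotProduct]
          refine Finset.sum_congr rfl fun i _ => ?_
          by_cases hKi : K k a i = 0
          · simp only [hKi, zero_mul]
          · have hts : τ i ≠ s := fun h =>
              absurd (h ▸ tau_le_sig (τ := τ) hKi) (not_le.2 hσlt)
            rw [hy]; simp only [if_neg hts]
        have hH0 : s * sigK K τ k a / (s - sigK K τ k a) ≠ 0 :=
          div_ne_zero (mul_ne_zero hs h0) (tsub_pos_of_lt hσlt).ne'
        have hσ'le : sigK K τ' k a ≤ s * sigK K τ k a / (s - sigK K τ k a) := by
          apply Finset.sup_le; intro i _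
          split_ifs with hKi
          · exact zero_le
          · have hτle : τ i ≤ sigK K τ k a := tau_le_sig hKi
            have hts : τ i ≠ s := fun h => absurd (h ▸ hτle) (not_le.2 hσlt)
            simp only [hτ', if_neg hts]
            have h1 : s - τ i ≠ 0 :=
              (tsub_pos_of_lt (lt_of_le_of_lt hτle hσlt)).ne'
            rw [div_le_iff₀ (pos_iff_ne_zero.2 h1)]
            calc s * τ i ≤ s * sigK K τ k a := mul_le_mul_right hτle s
              _ = s * sigK K τ k a / (s - sigK K τ k a) * (s - sigK K τ k a) :=
                  (div_mul_cancel₀ _ (tsub_pos_of_lt hσlt).ne').symm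
              _ ≤ s * sigK K τ k a / (s - sigK K τ k a) * (s - τ i) :=
                  mul_le_mul_right (tsub_le_tsub_left hτle s) _
        have hσ'pos : sigK K τ' k a ≠ 0 := by
          obtain ⟨i₁, -, hi₁⟩ := Finset.exists_mem_eq_sup univ hne
            (fun i => if K k a i = 0 then 0 else τ i)
          rw [show sigK K τ k a = univ.sup (fun i => if K k a i = 0 then 0 else τ i) from rfl]
            at h0 hσs hσlt
          by_cases hKi : K k a i₁ = 0
          · rw [hi₁, if_pos hKi] at h0; exact absurd rfl h0
          · have hτ1 : τ i₁ = univ.sup (fun i => if K k a i = 0 then 0 else τ i) := by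
              rw [hi₁, if_neg hKi]
            have hts : τ i₁ ≠ s := by rw [hτ1]; exact hσs
            have hτ's : τ' i₁ = s * τ i₁ / (s - τ i₁) := by
              simp only [hτ', if_neg hts]
            intro hcontra
            have hle' : τ' i₁ ≤ sigK K τ' k a := tau_le_sig (τ := τ') hKi
            rw [hcontra, le_zero_iff, hτ's] at hle'
            have : s * τ i₁ / (s - τ i₁) ≠ 0 := by
              rw [hτ1]
              exact div_ne_zero (mul_ne_zero hs h0) (tsub_pos_of_lt hσlt).ne'
            exact this hle'
        rw [hvy, split_div (‖(K k *ᵥ x) a‖₊ ^ (2:ℝ)) s (sigK K τ k a) hs h0 hσlt]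
        apply add_le_add_left
        rw [le_div_iff₀ (pos_iff_ne_zero.2 hσ'pos)]
        calc ‖(K k *ᵥ x) a‖₊ ^ (2:ℝ) / (s * sigK K τ k a / (s - sigK K τ k a)) * sigK K τ' k a
            ≤ ‖(K k *ᵥ x) a‖₊ ^ (2:ℝ) / (s * sigK K τ k a / (s - sigK K τ k a)) *
              (s * sigK K τ k a / (s - sigK K τ k a)) := mul_le_mul_right hσ'le _
          _ = ‖(K k *ᵥ x) a‖₊ ^ (2:ℝ) := div_mul_cancel₀ _ hH0
      have hfin : ∀ i, ‖y i‖₊ ^ (2:ℝ) / τ' i + ‖x i‖₊ ^ (2:ℝ) / s ≤ ‖x i‖₊ ^ (2:ℝ) / τ i := by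
        intro i
        by_cases hts : τ i = s
        · have : y i = 0 := by simp [hy, hts]
          rw [this, hts]
          simp [NNReal.zero_rpow (by norm_num : (2:ℝ) ≠ 0)]
        by_cases hτ0 : τ i = 0
        · have hx0 : x i = 0 := hx i hτ0
          have : y i = 0 := by simp [hy, hx0]
          rw [this, hx0]
          simp [NNReal.zero_rpow (by norm_num : (2:ℝ) ≠ 0)]
        · have hyi : y i = x i := by simp [hy, if_neg hts]
          have hτ'i : τ' i = s * τ i / (s - τ i) := by simp only [hτ', if_neg hts]
          rw [hyi, hτ'i,
            ← split_div (‖x i‖₊ ^ (2:ℝ)) s (τ i) hs hτ0 (lt_of_le_of_ne (hles i) hts)]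
      calc ∑ k, ∑ a, ‖(K k *ᵥ x) a‖₊ ^ (2:ℝ) / sigK K τ k a
          ≤ ∑ k, ∑ a, (‖(K k *ᵥ y) a‖₊ ^ (2:ℝ) / sigK K τ' k a
              + ‖(K k *ᵥ x) a‖₊ ^ (2:ℝ) / s) :=
            Finset.sum_le_sum fun k _ => Finset.sum_le_sum fun a _ => hstar k a
        _ = (∑ k, ∑ a, ‖(K k *ᵥ y) a‖₊ ^ (2:ℝ) / sigK K τ' k a)
              + (∑ k, ∑ a, ‖(K k *ᵥ x) a‖₊ ^ (2:ℝ)) / s := by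
            simp only [Finset.sum_add_distrib, Finset.sum_div]
        _ ≤ (∑ i, ‖y i‖₊ ^ (2:ℝ) / τ' i) + (∑ i, ‖x i‖₊ ^ (2:ℝ)) / s := by
            refine add_le_add IH (le_of_eq ?_)
            rw [kraus_energy K hKraus x]
        _ = ∑ i, (‖y i‖₊ ^ (2:ℝ) / τ' i + ‖x i‖₊ ^ (2:ℝ) / s) := by
            simp only [Finset.sum_add_distrib, Finset.sum_div]
        _ ≤ ∑ i, ‖x i‖₊ ^ (2:ℝ) / τ i := Finset.sum_le_sum fun i _ => hfin i

end M

section Key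
variable {N n m : ℕ}

lemma sig_sum_le (r : ℝ) (hr : r ≠ 0)
    (K : Fin m → Matrix (Fin N) (Fin n) ℂ)
    (hpair : ∀ (k : Fin m) (i : Fin n) (a b : Fin N), a ≠ b → K k a i = 0 ∨ K k b i = 0)
    (τ : Fin n → ℝ≥0) (k : Fin m) :
    ∑ a, sigK K τ k a ^ r ≤ ∑ i, τ i ^ r := by
  have h1 : ∀ a, sigK K τ k a ^ r ≤ ∑ i, (if K k a i = 0 then 0 else τ i ^ r) := by
    intro a
    rcases eq_or_ne (sigK K τ k a) 0 with h0 | h0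
    · rw [h0, NNReal.zero_rpow hr]; exact zero_le
    · rcases Finset.eq_empty_or_nonempty (univ : Finset (Fin n)) with he | hne
      · exfalso; apply h0; unfold sigK; rw [he, Finset.sup_empty]; rfl
      obtain ⟨i₁, -, hi₁⟩ := Finset.exists_mem_eq_sup univ hne
        (fun i => if K k a i = 0 then 0 else τ i)
      by_cases hKi : K k a i₁ = 0
      · exfalso; apply h0; unfold sigK; rw [hi₁, if_pos hKi]
      · have hσ : sigK K τ k a = τ i₁ := by unfold sigK; rw [hi₁, if_neg hKi]
        rw [hσ]
        have : τ i₁ ^ r = (if K k a i₁ = 0 then 0 else τ i₁ ^ r) := by rw [if_neg hKi]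
        rw [this]
        exact Finset.single_le_sum (f := fun i => if K k a i = 0 then 0 else τ i ^ r)
          (fun i _ => zero_le) (Finset.mem_univ i₁)
  calc ∑ a, sigK K τ k a ^ r ≤ ∑ a, ∑ i, (if K k a i = 0 then 0 else τ i ^ r) :=
        Finset.sum_le_sum fun a _ => h1 a
    _ = ∑ i, ∑ a, (if K k a i = 0 then 0 else τ i ^ r) := Finset.sum_comm
    _ ≤ ∑ i, τ i ^ r := by
        refine Finset.sum_le_sum fun i _ => ?_
        by_cases hex : ∃ a₀, K k a₀ i ≠ 0
        · obtain ⟨a₀, ha₀⟩ := hex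
          have : ∑ a, (if K k a i = 0 then 0 else τ i ^ r)
              = (if K k a₀ i = 0 then 0 else τ i ^ r) := by
            refine Finset.sum_eq_single a₀ (fun b _ hb => ?_) (fun h => absurd (Finset.mem_univ a₀) h)
            rw [if_pos ((hpair k i b a₀ hb).resolve_right ha₀)]
          rw [this, if_neg ha₀]
        · push_neg at hex
          have : ∀ a ∈ univ, (if K k a i = 0 then (0:ℝ≥0) else τ i ^ r) = 0 := by
            intro a _; rw [if_pos (hex a)]
          rw [Finset.sum_congr rfl this]
          simp

lemma keyLemma (pt : ℝ) (hpt1 : 1 ≤ pt) (hpt2 : pt ≤ 2)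
    (K : Fin m → Matrix (Fin N) (Fin n) ℂ)
    (hKraus : (∑ k, (K k)ᴴ * K k) = 1)
    (hpair : ∀ (k : Fin m) (i : Fin n) (a b : Fin N), a ≠ b → K k a i = 0 ∨ K k b i = 0)
    (w : Fin m → ℝ≥0) (hw : ∑ k, w k ^ (2:ℝ) ≤ 1) (x : Fin n → ℂ) :
    ∑ k, w k * (∑ a, ‖(K k *ᵥ x) a‖₊ ^ pt) ^ (1/pt)
      ≤ (∑ i, ‖x i‖₊ ^ pt) ^ (1/pt) := by
  have hpt0 : (0:ℝ) < pt := lt_of_lt_of_le zero_lt_one hpt1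
  set τ : Fin n → ℝ≥0 := fun i => ‖x i‖₊ ^ (2 - pt) with hτdef
  set Lpt : ℝ≥0 := ∑ i, ‖x i‖₊ ^ pt with hLdef
  by_cases hL0 : Lpt = 0
  · have hx0 : ∀ i, x i = 0 := by
      intro i
      have h := (Finset.sum_eq_zero_iff.1 hL0) i (Finset.mem_univ i)
      rw [NNReal.rpow_eq_zero_iff] at h
      exact nnnorm_eq_zero.1 h.1
    have hvz : ∀ k, (∑ a, ‖(K k *ᵥ x) a‖₊ ^ pt) = 0 := by
      intro k
      refine Finset.sum_eq_zero fun a _ => ?_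
      have : (K k *ᵥ x) a = 0 := by simp [Matrix.mulVec, dotProduct, hx0]
      rw [this]; simp [NNReal.zero_rpow hpt0.ne']
    rw [hL0]
    have : ∀ k ∈ univ, w k * (∑ a, ‖(K k *ᵥ x) a‖₊ ^ pt) ^ (1/pt) = 0 := by
      intro k _
      rw [hvz k, NNReal.zero_rpow (by positivity : (1:ℝ)/pt ≠ 0), mul_zero]
    rw [Finset.sum_congr rfl this]
    simp
  · have hx : ∀ i, τ i = 0 → x i = 0 := by
      intro i h
      simp only [hτdef] at h
      rw [NNReal.rpow_eq_zero_iff] at h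
      exact nnnorm_eq_zero.1 h.1
    have hsig0 : ∀ k a, sigK K τ k a = 0 → (K k *ᵥ x) a = 0 := by
      intro k a h
      simp only [Matrix.mulVec, dotProduct]
      refine Finset.sum_eq_zero fun i _ => ?_
      by_cases hKi : K k a i = 0
      · simp [hKi]
      · have hτi := tau_le_sig (τ := τ) hKi
        rw [h, le_zero_iff] at hτi
        simp [hx i hτi]
    set Q : Fin m → ℝ≥0 := fun k => ∑ a, ‖(K k *ᵥ x) a‖₊ ^ (2:ℝ) / sigK K τ k a with hQdef
    have hQsum : ∑ k, Q k ≤ Lpt := by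
      refine (lemmaM K hKraus (((univ.image τ).erase 0).card) τ x hx le_rfl).trans
        (le_of_eq ?_)
      refine Finset.sum_congr rfl fun i _ => ?_
      rcases eq_or_ne (‖x i‖₊) 0 with h0 | h0
      · simp only [hτdef, h0]
        rcases eq_or_ne pt 2 with h2 | h2
        · rw [h2]
          norm_num
        · rw [NNReal.zero_rpow (by intro hc; exact h2 (by linarith [sub_eq_zero.1 hc]) : (2:ℝ) - pt ≠ 0)]
          rw [NNReal.zero_rpow (by norm_num : (2:ℝ) ≠ 0), NNReal.zero_rpow hpt0.ne']
          simp
      · simp only [hτdef]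
        rw [← NNReal.rpow_sub h0, show (2:ℝ) - (2 - pt) = pt by ring]
    have hC : ∀ k, (∑ a, ‖(K k *ᵥ x) a‖₊ ^ pt) ^ (1/pt)
        ≤ Q k ^ ((1:ℝ)/2) * Lpt ^ ((2 - pt)/(2*pt)) := by
      intro k
      rcases eq_or_lt_of_le hpt2 with h2 | h2
      · -- pt = 2
        have hτ1 : ∀ i, τ i ≤ 1 := by
          intro i; simp only [hτdef, h2]
          norm_num
        have hσ1 : ∀ a, sigK K τ k a ≤ 1 := by
          intro a
          apply Finset.sup_le; intro i _
          split_ifs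
          · exact zero_le
          · exact hτ1 i
        have hmain : ∑ a, ‖(K k *ᵥ x) a‖₊ ^ pt ≤ Q k := by
          refine Finset.sum_le_sum fun a _ => ?_
          rcases eq_or_ne (sigK K τ k a) 0 with h0 | h0
          · rw [hsig0 k a h0]
            simp [NNReal.zero_rpow hpt0.ne']
          · rw [le_div_iff₀ (pos_iff_ne_zero.2 h0), h2]
            exact mul_le_of_le_one_right (zero_le) (hσ1 a)
        calc (∑ a, ‖(K k *ᵥ x) a‖₊ ^ pt) ^ (1/pt)
            ≤ Q k ^ (1/pt) := NNReal.rpow_le_rpow hmain (by positivity)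
          _ = Q k ^ ((1:ℝ)/2) * Lpt ^ ((2 - pt)/(2*pt)) := by
              rw [h2]
              norm_num
      · -- pt < 2
        have hr2 : (0:ℝ) < 2 - pt := by linarith
        have hconj : ((2:ℝ)/pt).HolderConjugate (2/(2 - pt)) := by
          rw [Real.holderConjugate_iff]
          constructor
          · rw [lt_div_iff₀ hpt0, one_mul]; exact h2
          · rw [inv_div, inv_div, ← add_div, show pt + (2 - pt) = 2 by ring]
            norm_num
        have hfg : ∀ a, ‖(K k *ᵥ x) a‖₊ ^ pt
            = (‖(K k *ᵥ x) a‖₊ ^ (2:ℝ) / sigK K τ k a) ^ (pt/2) * sigK K τ k a ^ (pt/2) := by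
          intro a
          rcases eq_or_ne (sigK K τ k a) 0 with h0 | h0
          · simp [hsig0 k a h0, h0, NNReal.zero_rpow, hpt0.ne',
              (show pt/2 ≠ 0 by positivity)]
          · rw [← NNReal.mul_rpow, div_mul_cancel₀ _ h0, ← NNReal.rpow_mul,
              show (2:ℝ) * (pt/2) = pt by ring]
        have hmain : ∑ a, ‖(K k *ᵥ x) a‖₊ ^ pt ≤ Q k ^ (pt/2) * Lpt ^ ((2-pt)/2) := by
          calc ∑ a, ‖(K k *ᵥ x) a‖₊ ^ pt
              = ∑ a, (‖(K k *ᵥ x) a‖₊ ^ (2:ℝ) / sigK K τ k a) ^ (pt/2)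
                  * sigK K τ k a ^ (pt/2) := Finset.sum_congr rfl fun a _ => hfg a
            _ ≤ (∑ a, ((‖(K k *ᵥ x) a‖₊ ^ (2:ℝ) / sigK K τ k a) ^ (pt/2)) ^ ((2:ℝ)/pt))
                  ^ (pt/2)
                * (∑ a, (sigK K τ k a ^ (pt/2)) ^ ((2:ℝ)/(2-pt))) ^ ((2-pt)/2) := by
                have hH := NNReal.inner_le_Lp_mul_Lq univ
                  (fun a => (‖(K k *ᵥ x) a‖₊ ^ (2:ℝ) / sigK K τ k a) ^ (pt/2))
                  (fun a => sigK K τ k a ^ (pt/2)) hconj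
                rw [one_div_div, one_div_div] at hH
                exact hH
            _ = Q k ^ (pt/2) * (∑ a, sigK K τ k a ^ (pt/(2-pt))) ^ ((2-pt)/2) := by
                congr 2
                · refine Finset.sum_congr rfl fun a _ => ?_
                  rw [← NNReal.rpow_mul, show (pt/2) * ((2:ℝ)/pt) = 1 by field_simp; try ring,
                    NNReal.rpow_one]
                · refine Finset.sum_congr rfl fun a _ => ?_
                  rw [← NNReal.rpow_mul, show (pt/2) * ((2:ℝ)/(2-pt)) = pt/(2-pt) by
                    field_simp]
            _ ≤ Q k ^ (pt/2) * Lpt ^ ((2-pt)/2) := by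
                apply mul_le_mul_right
                apply NNReal.rpow_le_rpow _ (by positivity)
                refine (sig_sum_le (pt/(2-pt)) (by positivity) K hpair τ k).trans (le_of_eq ?_)
                refine Finset.sum_congr rfl fun i _ => ?_
                simp only [hτdef]
                rw [← NNReal.rpow_mul, show (2 - pt) * (pt/(2-pt)) = pt by field_simp; try ring]
        calc (∑ a, ‖(K k *ᵥ x) a‖₊ ^ pt) ^ (1/pt)
            ≤ (Q k ^ (pt/2) * Lpt ^ ((2-pt)/2)) ^ (1/pt) :=
              NNReal.rpow_le_rpow hmain (by positivity)
          _ = Q k ^ ((1:ℝ)/2) * Lpt ^ ((2 - pt)/(2*pt)) := by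
              rw [NNReal.mul_rpow, ← NNReal.rpow_mul, ← NNReal.rpow_mul,
                show (pt/2) * (1/pt) = (1:ℝ)/2 by field_simp; try ring,
                show ((2-pt)/2) * (1/pt) = (2-pt)/(2*pt) by field_simp; try ring]
    calc ∑ k, w k * (∑ a, ‖(K k *ᵥ x) a‖₊ ^ pt) ^ (1/pt)
        ≤ ∑ k, w k * (Q k ^ ((1:ℝ)/2) * Lpt ^ ((2 - pt)/(2*pt))) :=
          Finset.sum_le_sum fun k _ => mul_le_mul_right (hC k) _
      _ = (∑ k, w k * Q k ^ ((1:ℝ)/2)) * Lpt ^ ((2 - pt)/(2*pt)) := by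
          rw [Finset.sum_mul]
          exact Finset.sum_congr rfl fun k _ => (mul_assoc _ _ _).symm
      _ ≤ ((∑ k, w k ^ (2:ℝ)) ^ ((1:ℝ)/2) * (∑ k, (Q k ^ ((1:ℝ)/2)) ^ (2:ℝ)) ^ ((1:ℝ)/2))
            * Lpt ^ ((2 - pt)/(2*pt)) := by
          apply mul_le_mul_left
          have hconj22 : ((2:ℝ)).HolderConjugate 2 := Real.HolderConjugate.two_two
          have := NNReal.inner_le_Lp_mul_Lq univ w (fun k => Q k ^ ((1:ℝ)/2)) hconj22
          simpa using this
      _ ≤ (1 * (∑ k, Q k) ^ ((1:ℝ)/2)) * Lpt ^ ((2 - pt)/(2*pt)) := by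
          apply mul_le_mul_left
          apply mul_le_mul'
          · exact NNReal.rpow_le_one hw (by norm_num)
          · apply NNReal.rpow_le_rpow _ (by norm_num)
            refine le_of_eq (Finset.sum_congr rfl fun k _ => ?_)
            rw [← NNReal.rpow_mul, show (1:ℝ)/2 * 2 = 1 by norm_num, NNReal.rpow_one]
      _ ≤ (1 * Lpt ^ ((1:ℝ)/2)) * Lpt ^ ((2 - pt)/(2*pt)) := by
          apply mul_le_mul_left
          apply mul_le_mul_right
          exact NNReal.rpow_le_rpow hQsum (by norm_num)
      _ = Lpt ^ ((1:ℝ)/pt) := by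
          rw [one_mul, ← NNReal.rpow_add hL0,
            show (1:ℝ)/2 + (2 - pt)/(2*pt) = 1/pt by field_simp; try ring]

end Key

section Main
variable {N n m : ℕ}

lemma nnLp_add_le (pt : ℝ) (hpt1 : 1 ≤ pt) {d : ℕ} (f g : Fin d → ℂ) :
    (∑ a, ‖f a + g a‖₊ ^ pt) ^ (1/pt)
      ≤ (∑ a, ‖f a‖₊ ^ pt) ^ (1/pt) + (∑ a, ‖g a‖₊ ^ pt) ^ (1/pt) := by
  have h1 : (∑ a, ‖f a + g a‖₊ ^ pt) ^ (1/pt)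
      ≤ (∑ a, (‖f a‖₊ + ‖g a‖₊) ^ pt) ^ (1/pt) := by
    apply NNReal.rpow_le_rpow _ (by positivity)
    exact Finset.sum_le_sum fun a _ => NNReal.rpow_le_rpow (nnnorm_add_le _ _) (by linarith)
  exact h1.trans (NNReal.Lp_add_le univ _ _ hpt1)

lemma nnLp_sum_le (pt : ℝ) (hpt1 : 1 ≤ pt) {d : ℕ} {ι : Type*} (s : Finset ι)
    (F : ι → Fin d → ℂ) :
    (∑ a, ‖∑ j ∈ s, F j a‖₊ ^ pt) ^ (1/pt) ≤ ∑ j ∈ s, (∑ a, ‖F j a‖₊ ^ pt) ^ (1/pt) := by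
  classical
  have hpt0 : (0:ℝ) < pt := by linarith
  induction s using Finset.induction_on with
  | empty =>
    simp [NNReal.zero_rpow hpt0.ne', NNReal.zero_rpow (by positivity : (1:ℝ)/pt ≠ 0),
      hpt0.ne']
  | @insert j s hj ih =>
    simp only [Finset.sum_insert hj]
    exact (nnLp_add_le pt hpt1 (F j) (fun a => ∑ j' ∈ s, F j' a)).trans
      (add_le_add_right ih _)

lemma nnLp_smul (pt : ℝ) (hpt0 : 0 < pt) {d : ℕ} (c : ℂ) (v : Fin d → ℂ) :
    (∑ a, ‖c * v a‖₊ ^ pt) ^ (1/pt) = ‖c‖₊ * (∑ a, ‖v a‖₊ ^ pt) ^ (1/pt) := by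
  have h1 : ∀ a, ‖c * v a‖₊ ^ pt = ‖c‖₊ ^ pt * ‖v a‖₊ ^ pt := fun a => by
    rw [nnnorm_mul, NNReal.mul_rpow]
  rw [Finset.sum_congr rfl fun a _ => h1 a, ← Finset.mul_sum, NNReal.mul_rpow,
    ← NNReal.rpow_mul, mul_one_div_cancel hpt0.ne', NNReal.rpow_one]

end Main

theorem sum_lqp_kraus_le (p : ℝ≥0∞) (hp1 : 1 ≤ p) (hp2 : p ≤ 2) (N n m : ℕ)
    (K : Fin m → Matrix (Fin N) (Fin n) ℂ) (hK : IsIncoherentKraus K)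
    (A : Matrix (Fin n) (Fin n) ℂ) :
    ∑ k, lqp 1 p (K k * A * (K k)ᴴ) ≤ lqp 1 p A := by
  obtain ⟨hKraus, hInc⟩ := hK
  have hp_top : p ≠ ∞ := (lt_of_le_of_lt hp2 ENNReal.ofNat_lt_top).ne
  set pt := p.toReal with hptdef
  have hpt1 : 1 ≤ pt := by
    rw [show (1:ℝ) = (1:ℝ≥0∞).toReal by simp]
    exact ENNReal.toReal_mono hp_top hp1
  have hpt2 : pt ≤ 2 := by
    rw [show (2:ℝ) = (2:ℝ≥0∞).toReal by simp]
    exact ENNReal.toReal_mono ENNReal.ofNat_lt_top.ne hp2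
  have hpt0 : (0:ℝ) < pt := zero_lt_one.trans_le hpt1
  have hpair : ∀ (k : Fin m) (i : Fin n) (a b : Fin N), a ≠ b →
      K k a i = 0 ∨ K k b i = 0 := by
    intro k i a b hab
    have hστ : IsIncoherentState (Matrix.diagonal (fun j => if j = i then (1:ℂ) else 0)) := by
      refine ⟨⟨Matrix.posSemidef_diagonal_iff.2 fun j => ?_, ?_⟩, Matrix.isDiag_diagonal _⟩
      · split_ifs
        · exact zero_le_one
        · exact le_refl 0
      · rw [Matrix.trace_diagonal]
        simp
    have hd := hInc k _ hστ hab
    have hentry : (K k * Matrix.diagonal (fun j => if j = i then (1:ℂ) else 0) * (K k)ᴴ) a b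
        = K k a i * star (K k b i) := by
      simp [Matrix.mul_apply, Matrix.conjTranspose_apply, Matrix.diagonal_apply,
        mul_ite, ite_mul, mul_zero, zero_mul, mul_one, Finset.sum_ite_eq,
        Finset.sum_ite_eq']
    have hd0 : K k a i * star (K k b i) = 0 := by rw [← hentry]; exact hd
    rcases mul_eq_zero.1 hd0 with h | h
    · exact Or.inl h
    · exact Or.inr (star_eq_zero.1 h)
  have hwsq : ∀ (j : Fin n) (k : Fin m),
      (∑ b, ‖K k b j‖₊) ^ (2:ℝ) = ∑ b, ‖K k b j‖₊ ^ (2:ℝ) := by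
    intro j k
    by_cases hz : ∀ b, K k b j = 0
    · have h1 : (∑ b, ‖K k b j‖₊) = 0 :=
        Finset.sum_eq_zero fun b _ => by rw [hz b, nnnorm_zero]
      have h2 : (∑ b, ‖K k b j‖₊ ^ (2:ℝ)) = 0 :=
        Finset.sum_eq_zero fun b _ => by
          rw [hz b, nnnorm_zero, NNReal.zero_rpow (by norm_num : (2:ℝ) ≠ 0)]
      rw [h1, h2, NNReal.zero_rpow (by norm_num : (2:ℝ) ≠ 0)]
    · push_neg at hz
      obtain ⟨b₀, hb₀⟩ := hz
      have hrest : ∀ b, b ≠ b₀ → K k b j = 0 := fun b hb =>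
        (hpair k j b b₀ hb).resolve_right hb₀
      have h1 : (∑ b, ‖K k b j‖₊) = ‖K k b₀ j‖₊ :=
        Finset.sum_eq_single b₀ (fun b _ hb => by rw [hrest b hb, nnnorm_zero])
          (fun h => absurd (Finset.mem_univ b₀) h)
      have h2 : (∑ b, ‖K k b j‖₊ ^ (2:ℝ)) = ‖K k b₀ j‖₊ ^ (2:ℝ) :=
        Finset.sum_eq_single b₀ (fun b _ hb => by
          rw [hrest b hb, nnnorm_zero, NNReal.zero_rpow (by norm_num : (2:ℝ) ≠ 0)])
          (fun h => absurd (Finset.mem_univ b₀) h)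
      rw [h1, h2]
  have hwsum : ∀ j : Fin n, ∑ k, (∑ b, ‖K k b j‖₊) ^ (2:ℝ) ≤ 1 := by
    intro j
    rw [Finset.sum_congr rfl fun k _ => hwsq j k]
    have hmv : ∀ (k : Fin m) (b : Fin N),
        (K k *ᵥ (fun i => if i = j then (1:ℂ) else 0)) b = K k b j := by
      intro k b
      simp [Matrix.mulVec, dotProduct, mul_ite, mul_one, mul_zero,
        Finset.sum_ite_eq']
    have he := kraus_energy K hKraus (fun i => if i = j then (1:ℂ) else 0)
    rw [Finset.sum_congr rfl fun k _ => Finset.sum_congr rfl fun b _ => by rw [hmv k b]] at he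
    rw [he]
    have : (∑ i, ‖if i = j then (1:ℂ) else 0‖₊ ^ (2:ℝ)) = 1 := by
      rw [Finset.sum_eq_single j (fun i _ hi => by
          rw [if_neg hi, nnnorm_zero, NNReal.zero_rpow (by norm_num : (2:ℝ) ≠ 0)])
        (fun h => absurd (Finset.mem_univ j) h)]
      simp
    rw [this]
  have hcol : ∀ {d : ℕ} (B : Matrix (Fin d) (Fin d) ℂ) (j : Fin d),
      (lpV p fun a => B a j) = (((∑ a, ‖B a j‖₊ ^ pt) ^ (1/pt) : ℝ≥0) : ℝ) := by
    intro d B j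
    unfold lpV
    rw [if_neg hp_top, NNReal.coe_rpow, NNReal.coe_sum]
    simp only [NNReal.coe_rpow, coe_nnnorm]
    rfl
  have hlqp : ∀ {d : ℕ} (B : Matrix (Fin d) (Fin d) ℂ),
      lqp 1 p B = ((∑ j, (∑ a, ‖B a j‖₊ ^ pt) ^ (1/pt) : ℝ≥0) : ℝ) := by
    intro d B
    unfold lqp
    simp only [hcol B]
    unfold lpV
    rw [if_neg (by simp : (1:ℝ≥0∞) ≠ ∞)]
    simp only [ENNReal.toReal_one, Real.rpow_one, one_div_one, Complex.norm_real]
    simp only [Real.norm_eq_abs, NNReal.coe_sum]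
    refine Finset.sum_congr rfl fun j _ => abs_of_nonneg (by positivity)
  have hBcol : ∀ (k : Fin m) (a b : Fin N), (K k * A * (K k)ᴴ) a b
      = ∑ j, star (K k b j) * (K k *ᵥ (fun i => A i j)) a := by
    intro k a b
    rw [Matrix.mul_apply]
    refine Finset.sum_congr rfl fun j _ => ?_
    rw [Matrix.conjTranspose_apply, Matrix.mul_apply, mul_comm]
    rfl
  have main : (∑ k, ∑ b, (∑ a, ‖(K k * A * (K k)ᴴ) a b‖₊ ^ pt) ^ (1/pt) : ℝ≥0)
      ≤ ∑ j, (∑ a, ‖A a j‖₊ ^ pt) ^ (1/pt) := by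
    calc ∑ k, ∑ b, (∑ a, ‖(K k * A * (K k)ᴴ) a b‖₊ ^ pt) ^ (1/pt)
        ≤ ∑ k, ∑ b, ∑ j, ‖K k b j‖₊ * (∑ a, ‖(K k *ᵥ (fun i => A i j)) a‖₊ ^ pt) ^ (1/pt) := by
          refine Finset.sum_le_sum fun k _ => Finset.sum_le_sum fun b _ => ?_
          have h1 : (∑ a, ‖(K k * A * (K k)ᴴ) a b‖₊ ^ pt) ^ (1/pt)
              = (∑ a, ‖∑ j, star (K k b j) * (K k *ᵥ (fun i => A i j)) a‖₊ ^ pt) ^ (1/pt) := by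
            congr 1
            exact Finset.sum_congr rfl fun a _ => by rw [hBcol k a b]
          rw [h1]
          refine (nnLp_sum_le pt hpt1 univ _).trans ?_
          refine Finset.sum_le_sum fun j _ => le_of_eq ?_
          rw [nnLp_smul pt hpt0, nnnorm_star]
      _ = ∑ j, ∑ k, (∑ b, ‖K k b j‖₊) * (∑ a, ‖(K k *ᵥ (fun i => A i j)) a‖₊ ^ pt) ^ (1/pt) := by
          rw [Finset.sum_congr rfl fun k _ => Finset.sum_comm]
          rw [Finset.sum_congr rfl fun k _ => Finset.sum_congr rfl fun j _ =>
            (Finset.sum_mul _ _ _).symm]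
          exact Finset.sum_comm
      _ ≤ ∑ j, (∑ a, ‖A a j‖₊ ^ pt) ^ (1/pt) :=
          Finset.sum_le_sum fun j _ => keyLemma pt hpt1 hpt2 K hKraus hpair
            (fun k => ∑ b, ‖K k b j‖₊) (hwsum j) (fun i => A i j)
  calc ∑ k, lqp 1 p (K k * A * (K k)ᴴ)
      = ((∑ k, ∑ b, (∑ a, ‖(K k * A * (K k)ᴴ) a b‖₊ ^ pt) ^ (1/pt) : ℝ≥0) : ℝ) := by
        rw [Finset.sum_congr rfl fun k _ => hlqp _, ← NNReal.coe_sum]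
    _ ≤ ((∑ j, (∑ a, ‖A a j‖₊ ^ pt) ^ (1/pt) : ℝ≥0) : ℝ) := NNReal.coe_le_coe.2 main
    _ = lqp 1 p A := (hlqp A).symm
end
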